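/- The set of singular real numbers coincides with ℚ: a real number ξ is singular (for every c > 0 and all sufficiently large t there is an integer q with 0 < q ≤ t and dist(qξ, ℤ) ≤ c/t) if and only if ξ is rational. -/

import Mathlib

/-- The distance from a real number to the nearest integer. -/
noncomputable def distZ (x : ℝ) : ℝ := |x - round x|

lemma distZ_nonneg (x : ℝ) : 0 ≤ distZ x := abs_nonneg _

lemma singular_arith (Q a d₁ d₂ N : ℝ) (hQ : 1 ≤ Q - 1/2) (ha : 0 ≤ a) (haQ : a ≤ Q - 1/2)
    (hd₁ : 0 ≤ d₁) (hd₂ : 0 ≤ d₂) (h₁ : d₁ * (Q - 1/2) ≤ 1/4) (h₂ : d₂ * (Q - 1/2) ≤ 1/4)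
    (hN : 1 ≤ N) (hb : N ≤ Q * d₁ + a * d₂) : False := by nlinarith

lemma distZ_pos_of_irrational (ξ : ℝ) (h : ¬ ∃ r : ℚ, ξ = (r : ℝ))
    (q : ℤ) (hq : q ≠ 0) : 0 < distZ ((q : ℝ) * ξ) := by
  rcases lt_or_eq_of_le (distZ_nonneg ((q : ℝ) * ξ)) with h' | h'
  · exact h'
  exfalso
  apply h
  have heq : (q : ℝ) * ξ = (round ((q : ℝ) * ξ) : ℝ) := by
    have := abs_eq_zero.mp h'.symm
    linarith [this]
  refine ⟨(round ((q : ℝ) * ξ) : ℚ) / (q : ℚ), ?_⟩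
  have hq' : (q : ℝ) ≠ 0 := Int.cast_ne_zero.mpr hq
  push_cast
  field_simp
  rw [mul_comm ξ (q : ℝ)]
  linarith [heq]

/-- A real number is singular if and only if it is rational. -/
theorem singular_iff_rational (ξ : ℝ) :
    (∀ c : ℝ, 0 < c → ∃ t₀ : ℝ, ∀ t : ℝ, t₀ ≤ t →
      ∃ q : ℤ, 0 < q ∧ (q : ℝ) ≤ t ∧ distZ ((q : ℝ) * ξ) ≤ c / t) ↔
    ∃ r : ℚ, ξ = (r : ℝ) := by
  constructor
  · intro H
    by_contra hirr
    classical
    have hpos : ∀ q : ℤ, q ≠ 0 → 0 < distZ ((q : ℝ) * ξ) :=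
      distZ_pos_of_irrational ξ hirr
    obtain ⟨t₀, ht₀⟩ := H (1/4) (by norm_num)
    set t₁ : ℝ := max t₀ 1 with ht₁def
    have ht₀t₁ : t₀ ≤ t₁ := le_max_left _ _
    have ht₁1 : (1:ℝ) ≤ t₁ := le_max_right _ _
    have ht₁pos : (0:ℝ) < t₁ := lt_of_lt_of_le one_pos ht₁1
    clear_value t₁
    set T : ℕ := ⌈t₁⌉₊ + 1 with hT
    have hTt₁ : t₁ ≤ (T : ℝ) := by
      have h1 : t₁ ≤ (⌈t₁⌉₊ : ℝ) := Nat.le_ceil t₁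
      rw [hT]; push_cast; linarith
    clear_value T
    -- minimum of distZ over 1 ≤ q ≤ T is positive
    obtain ⟨m, hmpos, hmle⟩ : ∃ m : ℝ, 0 < m ∧
        ∀ q : ℕ, 1 ≤ q → q ≤ T → m ≤ distZ ((q : ℝ) * ξ) := by
      have hne : (Finset.Icc 1 T).Nonempty := ⟨1, Finset.mem_Icc.mpr ⟨le_refl 1, by omega⟩⟩
      refine ⟨(Finset.Icc 1 T).inf' hne (fun q : ℕ => distZ ((q : ℝ) * ξ)), ?_, ?_⟩
      · rw [Finset.lt_inf'_iff]
        intro q hq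
        have hq1 : 1 ≤ q := (Finset.mem_Icc.mp hq).1
        have := hpos (q : ℤ) (by exact_mod_cast Nat.one_le_iff_ne_zero.mp hq1)
        simpa using this
      · intro q h1 h2
        exact Finset.inf'_le _ (Finset.mem_Icc.mpr ⟨h1, h2⟩)
    -- get some denominator beating m
    obtain ⟨q₀, hq₀pos, hq₀le, hq₀d⟩ := ht₀ (max t₁ (1/m))
      (le_trans ht₀t₁ (le_max_left _ _))
    have hq₀d' : distZ ((q₀ : ℝ) * ξ) < m := by
      have htpos : (0:ℝ) < max t₁ (1/m) := lt_of_lt_of_le ht₁pos (le_max_left _ _)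
      have h1m : 1/m ≤ max t₁ (1/m) := le_max_right _ _
      have h1mpos : (0:ℝ) < 1/m := by positivity
      have : (1/4 : ℝ) / max t₁ (1/m) ≤ (1/4) / (1/m) :=
        div_le_div_of_nonneg_left (by norm_num) h1mpos h1m
      have hlt : (1/4 : ℝ) / (1/m) < m := by
        rw [div_div_eq_mul_div, div_one]
        linarith
      linarith
    -- minimal such denominator q'
    have hS : ∃ q : ℕ, 1 ≤ q ∧ distZ ((q : ℝ) * ξ) < m := by
      refine ⟨q₀.toNat, by omega, ?_⟩
      have hc : ((q₀.toNat : ℕ) : ℝ) = (q₀ : ℝ) := by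
        exact_mod_cast congrArg (fun z : ℤ => (z : ℝ)) (Int.toNat_of_nonneg hq₀pos.le)
      rw [hc]; exact hq₀d'
    obtain ⟨q', ⟨hq'1, hq'd⟩, hq'min⟩ : ∃ q' : ℕ,
        (1 ≤ q' ∧ distZ ((q' : ℝ) * ξ) < m) ∧
        ∀ q < q', ¬(1 ≤ q ∧ distZ ((q : ℝ) * ξ) < m) :=
      ⟨Nat.find hS, Nat.find_spec hS, fun q hq => Nat.find_min hS hq⟩
    have hmin : ∀ q : ℕ, 1 ≤ q → q < q' → m ≤ distZ ((q : ℝ) * ξ) := by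
      intro q h1 h2
      by_contra hcon
      exact hq'min q h2 ⟨h1, by linarith⟩
    have hq'T : T < q' := by
      by_contra hcon
      push_neg at hcon
      have := hmle q' hq'1 hcon
      linarith
    have hq'big : t₁ + 1 ≤ (q' : ℝ) := by
      have h2 : (T : ℝ) + 1 ≤ (q' : ℝ) := by exact_mod_cast hq'T
      linarith
    -- apply hypothesis at t = q' - 1/2
    obtain ⟨q₃, hq₃pos, hq₃le, hq₃d⟩ := ht₀ ((q' : ℝ) - 1/2) (by linarith)
    have hupos : (0:ℝ) < (q' : ℝ) - 1/2 := by linarith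
    have hq₃lt : q₃ < (q' : ℤ) := by
      have : (q₃ : ℝ) < (q' : ℝ) := by linarith
      exact_mod_cast this
    have hq₃m : m ≤ distZ ((q₃ : ℝ) * ξ) := by
      have hc : ((q₃.toNat : ℕ) : ℝ) = (q₃ : ℝ) := by
        exact_mod_cast congrArg (fun z : ℤ => (z : ℝ)) (Int.toNat_of_nonneg hq₃pos.le)
      have := hmin q₃.toNat (by omega) (by omega)
      rwa [hc] at this
    have hq'dle : distZ ((q' : ℝ) * ξ) ≤ (1/4) / ((q' : ℝ) - 1/2) := by
      calc distZ ((q' : ℝ) * ξ) ≤ m := hq'd.le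
        _ ≤ distZ ((q₃ : ℝ) * ξ) := hq₃m
        _ ≤ (1/4) / ((q' : ℝ) - 1/2) := hq₃d
    set p₃ : ℤ := round ((q₃ : ℝ) * ξ) with hp₃
    set p' : ℤ := round ((q' : ℝ) * ξ) with hp'
    have hd₃ : distZ ((q₃ : ℝ) * ξ) = |(q₃ : ℝ) * ξ - (p₃ : ℝ)| := rfl
    have hd' : distZ ((q' : ℝ) * ξ) = |(q' : ℝ) * ξ - (p' : ℝ)| := rfl
    have hq'nn : (0:ℝ) ≤ (q' : ℝ) := by positivity
    have hq₃nn : (0:ℝ) ≤ (q₃ : ℝ) := by exact_mod_cast hq₃pos.le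
    by_cases hN : p₃ * (q' : ℤ) - p' * q₃ = 0
    · -- equal fractions case
      have hNR : ((p₃ : ℝ)) * (q' : ℝ) - (p' : ℝ) * (q₃ : ℝ) = 0 := by
        exact_mod_cast congrArg (fun z : ℤ => (z : ℝ)) hN
      have hid : (q' : ℝ) * ((q₃ : ℝ) * ξ - (p₃ : ℝ))
          = (q₃ : ℝ) * ((q' : ℝ) * ξ - (p' : ℝ)) := by linear_combination -hNR
      have e1 : (q' : ℝ) * |(q₃ : ℝ) * ξ - (p₃ : ℝ)|
          = |(q' : ℝ) * ((q₃ : ℝ) * ξ - (p₃ : ℝ))| := by rw [abs_mul, abs_of_nonneg hq'nn]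
      have e2 : (q₃ : ℝ) * |(q' : ℝ) * ξ - (p' : ℝ)|
          = |(q₃ : ℝ) * ((q' : ℝ) * ξ - (p' : ℝ))| := by rw [abs_mul, abs_of_nonneg hq₃nn]
      have habs : (q' : ℝ) * distZ ((q₃ : ℝ) * ξ) = (q₃ : ℝ) * distZ ((q' : ℝ) * ξ) := by
        rw [hd₃, hd', e1, e2, hid]
      have h1 : (q₃ : ℝ) ≤ (q' : ℝ) := by linarith
      have h2 : (0:ℝ) < (q₃ : ℝ) := by exact_mod_cast hq₃pos
      nlinarith [hq₃m, hmpos, hq'd]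
    · -- distinct fractions case
      have hNabs : (1:ℝ) ≤ |((p₃ * (q' : ℤ) - p' * q₃ : ℤ) : ℝ)| := by
        have h1 : (1:ℤ) ≤ |p₃ * (q' : ℤ) - p' * q₃| := Int.one_le_abs hN
        calc (1:ℝ) = ((1:ℤ) : ℝ) := by norm_num
          _ ≤ ((|p₃ * (q' : ℤ) - p' * q₃| : ℤ) : ℝ) := by exact_mod_cast h1
          _ = |((p₃ * (q' : ℤ) - p' * q₃ : ℤ) : ℝ)| := by simp [Int.cast_abs]
      have hid : ((p₃ * (q' : ℤ) - p' * q₃ : ℤ) : ℝ)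
          = (q' : ℝ) * ((p₃ : ℝ) - (q₃ : ℝ) * ξ) - (q₃ : ℝ) * ((p' : ℝ) - (q' : ℝ) * ξ) := by
        push_cast; ring
      have hbound : |((p₃ * (q' : ℤ) - p' * q₃ : ℤ) : ℝ)|
          ≤ (q' : ℝ) * distZ ((q₃ : ℝ) * ξ) + (q₃ : ℝ) * distZ ((q' : ℝ) * ξ) := by
        rw [hid]
        calc |(q' : ℝ) * ((p₃ : ℝ) - (q₃ : ℝ) * ξ) - (q₃ : ℝ) * ((p' : ℝ) - (q' : ℝ) * ξ)|
            ≤ |(q' : ℝ) * ((p₃ : ℝ) - (q₃ : ℝ) * ξ)| + |(q₃ : ℝ) * ((p' : ℝ) - (q' : ℝ) * ξ)| :=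
              abs_sub _ _
          _ = (q' : ℝ) * |(p₃ : ℝ) - (q₃ : ℝ) * ξ| + (q₃ : ℝ) * |(p' : ℝ) - (q' : ℝ) * ξ| := by
              rw [abs_mul, abs_mul, abs_of_nonneg hq'nn, abs_of_nonneg hq₃nn]
          _ = (q' : ℝ) * distZ ((q₃ : ℝ) * ξ) + (q₃ : ℝ) * distZ ((q' : ℝ) * ξ) := by
              rw [hd₃, hd', abs_sub_comm ((p₃ : ℝ)) _, abs_sub_comm ((p' : ℝ)) _]
      -- numeric contradiction
      have hd₃u : distZ ((q₃ : ℝ) * ξ) * ((q' : ℝ) - 1/2) ≤ 1/4 :=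
        (le_div_iff₀ hupos).mp hq₃d
      have hd'u : distZ ((q' : ℝ) * ξ) * ((q' : ℝ) - 1/2) ≤ 1/4 :=
        (le_div_iff₀ hupos).mp hq'dle
      have hu1 : (1:ℝ) ≤ (q' : ℝ) - 1/2 := by linarith
      exact singular_arith (q' : ℝ) (q₃ : ℝ) (distZ ((q₃ : ℝ) * ξ)) (distZ ((q' : ℝ) * ξ))
        ((q' : ℝ) * distZ ((q₃ : ℝ) * ξ) + (q₃ : ℝ) * distZ ((q' : ℝ) * ξ))
        hu1 hq₃nn hq₃le (distZ_nonneg _) (distZ_nonneg _) hd₃u hd'u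
        (le_trans hNabs hbound) (le_refl _)
  · rintro ⟨r, rfl⟩ c hc
    refine ⟨max (r.den : ℝ) 1, fun t ht => ?_⟩
    have ht1 : (1:ℝ) ≤ t := le_trans (le_max_right _ _) ht
    refine ⟨(r.den : ℤ), by exact_mod_cast r.pos, ?_, ?_⟩
    · exact le_trans (by push_cast; exact le_max_left _ _) ht
    · have hden : ((r.den : ℤ) : ℝ) * (r : ℝ) = ((r.num : ℤ) : ℝ) := by
        have h0 : (r.den : ℚ) ≠ 0 := by exact_mod_cast r.den_ne_zero
        have h1 : (r.den : ℚ) * r = (r.num : ℚ) := by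
          rw [mul_comm]
          field_simp [Rat.num_div_den]
          exact Rat.mul_den_eq_num r
        push_cast
        exact_mod_cast congrArg (fun x : ℚ => (x : ℝ)) h1
      rw [hden]
      have h2 : distZ ((r.num : ℝ)) = 0 := by
        simp [distZ, round_intCast]
      rw [h2]
      positivity
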